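/- Every finite interval order admits an admissible labelling: a linear extension λ: X → {1,…,|X|} such that for all x, y, if λ(x) < λ(y) then either I(x) ⊊ I(y), or I(x) = I(y) and F(x) ⊊ F(y), or x ∼ y. -/

import Mathlib

/-- The principal down-set `I(x) = {z | z < x}` (excluding `x`). -/
def Iset {X : Type*} [PartialOrder X] (x : X) : Set X := {z | z < x}

/-- The principal up-set `F(x) = {z | z > x}` (excluding `x`). -/
def Fset {X : Type*} [PartialOrder X] (x : X) : Set X := {z | x < z}

/-- Order equivalence: same principal down-set and up-set. -/
def OrdEquiv {X : Type*} [PartialOrder X] (x y : X) : Prop :=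
  Iset x = Iset y ∧ Fset x = Fset y

/-- Incomparability. -/
def Incomp {X : Type*} [PartialOrder X] (a b : X) : Prop := ¬ a ≤ b ∧ ¬ b ≤ a

/-- `P` avoids the poset `2+2`: no two 2-chains with all cross pairs incomparable. -/
def Avoids22 (X : Type*) [PartialOrder X] : Prop :=
  ¬ ∃ a b c d : X, a < b ∧ c < d ∧
    Incomp a c ∧ Incomp a d ∧ Incomp b c ∧ Incomp b d

/-- `P` is an interval order: it has a representation by closed real intervals. -/
def IsIntervalOrder (X : Type*) [PartialOrder X] : Prop :=
  ∃ a b : X → ℝ, (∀ x, a x ≤ b x) ∧ ∀ x y : X, x < y ↔ b x < a y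

/-- An admissible labelling: a linear extension `λ : X → Fin |X|` such that
`λ x < λ y` implies `I(x) ⊊ I(y)`, or `I(x) = I(y)` and `F(x) ⊊ F(y)`, or `x ∼ y`. -/
def IsAdmissible {X : Type*} [PartialOrder X] [Fintype X]
    (lab : X ≃ Fin (Fintype.card X)) : Prop :=
  (∀ x y : X, x < y → lab x < lab y) ∧
  ∀ x y : X, lab x < lab y →
    Iset x ⊂ Iset y ∨ (Iset x = Iset y ∧ Fset x ⊂ Fset y) ∨ OrdEquiv x y

/-- In a 2+2-free poset, principal down-sets are totally ordered by inclusion. -/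
lemma Iset_comp {X : Type*} [PartialOrder X] (h : Avoids22 X) (x y : X) :
    Iset x ⊆ Iset y ∨ Iset y ⊆ Iset x := by
  by_contra hc
  push_neg at hc
  obtain ⟨u, hux, huy⟩ := Set.not_subset.mp hc.1
  obtain ⟨v, hvy, hvx⟩ := Set.not_subset.mp hc.2
  simp only [Iset, Set.mem_setOf_eq] at hux huy hvy hvx
  exact h ⟨u, x, v, y, hux, hvy,
    ⟨fun hle => huy (lt_of_le_of_lt hle hvy), fun hle => hvx (lt_of_le_of_lt hle hux)⟩,
    ⟨fun hle => (lt_or_eq_of_le hle).elim huy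
        (fun he => hvx (hvy.trans (he ▸ hux))),
      fun hle => hvx (hvy.trans (lt_of_le_of_lt hle hux))⟩,
    ⟨fun hle => huy ((hux.trans_le hle).trans hvy),
      fun hle => (lt_or_eq_of_le hle).elim hvx
        (fun he => huy (hux.trans (he ▸ hvy)))⟩,
    ⟨fun hle => huy (hux.trans_le hle), fun hle => hvx (hvy.trans_le hle)⟩⟩

/-- In a 2+2-free poset, principal up-sets are totally ordered by inclusion. -/
lemma Fset_comp {X : Type*} [PartialOrder X] (h : Avoids22 X) (x y : X) :
    Fset x ⊆ Fset y ∨ Fset y ⊆ Fset x := by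
  by_contra hc
  push_neg at hc
  obtain ⟨u, hxu, huy⟩ := Set.not_subset.mp hc.1
  obtain ⟨v, hyv, hvx⟩ := Set.not_subset.mp hc.2
  simp only [Fset, Set.mem_setOf_eq] at hxu huy hyv hvx
  exact h ⟨x, u, y, v, hxu, hyv,
    ⟨fun hle => hvx (lt_of_le_of_lt hle hyv), fun hle => huy (lt_of_le_of_lt hle hxu)⟩,
    ⟨fun hle => (lt_or_eq_of_le hle).elim hvx
        (fun he => huy ((he ▸ hyv).trans hxu)),
      fun hle => huy ((hyv.trans_le hle).trans hxu)⟩,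
    ⟨fun hle => hvx (hxu.trans (lt_of_le_of_lt hle hyv)),
      fun hle => (lt_or_eq_of_le hle).elim huy
        (fun he => hvx (hxu.trans (he ▸ hyv)))⟩,
    ⟨fun hle => hvx (hxu.trans_le hle), fun hle => huy (hyv.trans_le hle)⟩⟩

theorem stmt4 {X : Type*} [PartialOrder X] [Fintype X] (h : Avoids22 X) :
    ∃ lab : X ≃ Fin (Fintype.card X), IsAdmissible lab := by
  classical
  set n := Fintype.card X with hn
  -- ncard characterizations
  have IltI : ∀ x y : X, (Iset x).ncard < (Iset y).ncard → Iset x ⊂ Iset y := by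
    intro x y hlt
    rcases Iset_comp h x y with hs | hs
    · exact hs.ssubset_of_ne (fun he => by rw [he] at hlt; exact lt_irrefl _ hlt)
    · exact absurd (Set.ncard_le_ncard hs (Set.toFinite _)) (not_le.mpr hlt)
  have IeqI : ∀ x y : X, (Iset x).ncard = (Iset y).ncard → Iset x = Iset y := by
    intro x y he
    rcases Iset_comp h x y with hs | hs
    · exact Set.eq_of_subset_of_ncard_le hs he.ge (Set.toFinite _)
    · exact (Set.eq_of_subset_of_ncard_le hs he.le (Set.toFinite _)).symm
  have FltF : ∀ x y : X, (Fset x).ncard < (Fset y).ncard → Fset x ⊂ Fset y := by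
    intro x y hlt
    rcases Fset_comp h x y with hs | hs
    · exact hs.ssubset_of_ne (fun he => by rw [he] at hlt; exact lt_irrefl _ hlt)
    · exact absurd (Set.ncard_le_ncard hs (Set.toFinite _)) (not_le.mpr hlt)
  have FeqF : ∀ x y : X, (Fset x).ncard = (Fset y).ncard → Fset x = Fset y := by
    intro x y he
    rcases Fset_comp h x y with hs | hs
    · exact Set.eq_of_subset_of_ncard_le hs he.ge (Set.toFinite _)
    · exact (Set.eq_of_subset_of_ncard_le hs he.le (Set.toFinite _)).symm
  -- the sorting key
  let e : X ≃ Fin n := Fintype.equivFin X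
  let T := Lex (ℕ × Lex (ℕ × Fin n))
  let K : X → T := fun x => toLex ((Iset x).ncard, toLex ((Fset x).ncard, e x))
  have hK : Function.Injective K := by
    intro x y hxy
    have h2 : ((Iset x).ncard, toLex ((Fset x).ncard, e x))
        = ((Iset y).ncard, toLex ((Fset y).ncard, e y)) := hxy
    have h3 : ((Fset x).ncard, e x) = ((Fset y).ncard, (e y : Fin n)) :=
      congrArg Prod.snd h2
    exact e.injective (congrArg Prod.snd h3)
  let s : Finset T := Finset.univ.image K
  have hs : s.card = n := by
    rw [Finset.card_image_of_injective _ hK, Finset.card_univ]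
  let iso := s.orderIsoOfFin hs
  let eX : X ≃ s := Equiv.ofBijective
    (fun x => ⟨K x, Finset.mem_image_of_mem _ (Finset.mem_univ x)⟩)
    ⟨fun a b hab => hK (congrArg Subtype.val hab), by
      rintro ⟨t, ht⟩
      obtain ⟨x, -, hx⟩ := Finset.mem_image.mp ht
      exact ⟨x, Subtype.ext hx⟩⟩
  refine ⟨eX.trans iso.symm.toEquiv, ?_, ?_⟩ <;> intro x y hxy
  · -- linear extension
    have hsub : Iset x ⊂ Iset y := by
      constructor
      · intro z hz; exact lt_trans hz hxy
      · intro hc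
        have : x ∈ Iset y := hxy
        exact lt_irrefl x (hc this)
    have hlt : K x < K y := by
      apply Prod.Lex.lt_iff.mpr
      exact Or.inl (Set.ncard_lt_ncard hsub (Set.toFinite _))
    show iso.symm (eX x) < iso.symm (eX y)
    rw [iso.symm.lt_iff_lt]
    exact hlt
  · -- admissibility
    have hKlt : K x < K y := by
      have : iso.symm (eX x) < iso.symm (eX y) := hxy
      rw [iso.symm.lt_iff_lt] at this
      exact this
    rcases Prod.Lex.lt_iff.mp hKlt with h1 | ⟨h1, h2⟩
    · exact Or.inl (IltI x y h1)
    · rcases Prod.Lex.lt_iff.mp h2 with h3 | ⟨h3, -⟩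
      · exact Or.inr (Or.inl ⟨IeqI x y h1, FltF x y h3⟩)
      · exact Or.inr (Or.inr ⟨IeqI x y h1, FeqF x y h3⟩)
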